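/- Consider a feasible anonymous Groves mechanism t in a multi-unit auction whose total payment at every θ equals 0 whenever the highest bid [θ]_1 equals the upper bound U. If t is also welfare-dominated-free only when no improvement is possible, then for every partial profile θ_{-i}, the maximum over θ_i of the total payment Σ_j t_j(θ) equals 0; moreover if for some θ_{-i} this maximum is strictly less than 0, then t is dominated by another feasible Groves mechanism (obtained by increasing agent i's tax function h by a positive constant on a neighborhood). -/
import Mathlib


/-- The `k`-th highest element (1-indexed) of a multiset of reals. -/
noncomputable def kthHighest (m : Multiset ℝ) (k : ℕ) : ℝ :=
  (m.sort (· ≤ ·)).getD (Multiset.card m - k) 0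

/-- The multiset of all bids. -/
def allBids {n : ℕ} (θ : Fin n → ℝ) : Multiset ℝ :=
  (Finset.univ.val : Multiset (Fin n)).map θ

/-- The multiset of bids of players other than `i`. -/
def otherBids {n : ℕ} (θ : Fin n → ℝ) (i : Fin n) : Multiset ℝ :=
  ((Finset.univ.erase i).val : Multiset (Fin n)).map θ

/-- Total payment of the Groves mechanism given (player-wise) by
`h' : Fin n → Multiset ℝ → ℝ`: the total VCG payment `−m[θ]_{m+1}` plus
`∑_i h'_i(θ_{-i})`. -/
noncomputable def totalPay {n : ℕ} (m : ℕ) (h' : Fin n → Multiset ℝ → ℝ)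
    (θ : Fin n → ℝ) : ℝ :=
  -(m : ℝ) * kthHighest (allBids θ) (m + 1) + ∑ i, h' i (otherBids θ i)


lemma allBids_eq_cons {n : ℕ} (θ : Fin n → ℝ) (i : Fin n) :
    allBids θ = θ i ::ₘ otherBids θ i := by
  simp only [allBids, otherBids, Finset.erase_val]
  rw [← Multiset.map_cons, Multiset.cons_erase (Finset.mem_univ i)]

lemma otherBids_update {n : ℕ} (θ : Fin n → ℝ) (i : Fin n) (x : ℝ) :
    otherBids (Function.update θ i x) i = otherBids θ i := by
  unfold otherBids
  refine Multiset.map_congr rfl fun j hj => ?_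
  have hj' : j ≠ i := by
    have : j ∈ Finset.univ.erase i := hj
    exact (Finset.mem_erase.mp this).1
  exact Function.update_of_ne hj' _ _

lemma sum_h_eq {n : ℕ} (h : Multiset ℝ → ℝ) (θ : Fin n → ℝ) :
    ∑ j, h (otherBids θ j)
      = ((allBids θ).map (fun x => h ((allBids θ).erase x))).sum := by
  have e : ∀ j, otherBids θ j = (allBids θ).erase (θ j) := fun j => by
    rw [allBids_eq_cons θ j, Multiset.erase_cons_head]
  calc ∑ j, h (otherBids θ j)
      = ∑ j, h ((allBids θ).erase (θ j)) := by
        refine Finset.sum_congr rfl fun j _ => by rw [e j]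
    _ = ((Finset.univ.val.map θ).map (fun x => h ((allBids θ).erase x))).sum := by
        rw [Multiset.map_map]; rfl
    _ = _ := rfl

lemma totalPay_congr {n m : ℕ} (h : Multiset ℝ → ℝ) (θ θ' : Fin n → ℝ)
    (hA : allBids θ = allBids θ') :
    totalPay m (fun _ => h) θ = totalPay m (fun _ => h) θ' := by
  unfold totalPay
  rw [sum_h_eq, sum_h_eq, hA]

/-- The anonymous Groves mechanism given by `h` is dominated by some feasible
Groves mechanism: some `h'` yields a feasible mechanism with every player's
tax weakly larger (i.e. `h'_i(θ_{-i}) ≥ h(θ_{-i})`) everywhere, and somewhere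
strictly larger. -/
def DominatedMech (n m : ℕ) (L U : ℝ) (h : Multiset ℝ → ℝ) : Prop :=
  ∃ h' : Fin n → Multiset ℝ → ℝ,
    (∀ θ : Fin n → ℝ, (∀ i, θ i ∈ Set.Icc L U) → totalPay m h' θ ≤ 0) ∧
    (∀ θ : Fin n → ℝ, (∀ i, θ i ∈ Set.Icc L U) → ∀ i : Fin n,
      h (otherBids θ i) ≤ h' i (otherBids θ i)) ∧
    (∃ θ : Fin n → ℝ, (∀ i, θ i ∈ Set.Icc L U) ∧ ∃ i : Fin n,
      h (otherBids θ i) < h' i (otherBids θ i))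

lemma dominated_of_uniform_gap {n m : ℕ} {L U : ℝ} {h : Multiset ℝ → ℝ}
    (hfeas : ∀ θ : Fin n → ℝ, (∀ i, θ i ∈ Set.Icc L U) →
      totalPay m (fun _ => h) θ ≤ 0)
    (θ : Fin n → ℝ) (hθ : ∀ i, θ i ∈ Set.Icc L U) (i : Fin n)
    (ε : ℝ) (hε : 0 < ε)
    (hle : ∀ θi' ∈ Set.Icc L U,
      totalPay m (fun _ => h) (Function.update θ i θi') ≤ -ε) :
    DominatedMech n m L U h := by
  set T := otherBids θ i with hT
  refine ⟨fun j s => h s + (if j = i ∧ s = T then ε else 0), ?_, ?_, ?_⟩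
  · intro θ' hθ'
    have key : totalPay m (fun j s => h s + (if j = i ∧ s = T then ε else 0)) θ'
        = totalPay m (fun _ => h) θ' + (if otherBids θ' i = T then ε else 0) := by
      unfold totalPay
      rw [Finset.sum_add_distrib]
      have : ∑ j, (if j = i ∧ otherBids θ' j = T then ε else 0)
          = (if otherBids θ' i = T then ε else 0) := by
        rw [Finset.sum_eq_single_of_mem i (Finset.mem_univ i)
          (fun j _ hj => by simp [hj])]
        simp
      rw [this]; ring
    rw [key]
    by_cases heq : otherBids θ' i = T
    · have hAB : allBids θ' = allBids (Function.update θ i (θ' i)) := by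
        rw [allBids_eq_cons θ' i, allBids_eq_cons (Function.update θ i (θ' i)) i,
          Function.update_self, otherBids_update, heq, hT]
      have := hle (θ' i) (hθ' i)
      rw [totalPay_congr h θ' (Function.update θ i (θ' i)) hAB]
      simp only [heq, if_true]
      linarith
    · simp only [heq, if_false]
      have := hfeas θ' hθ'
      linarith
  · intro θ' _ j
    have : (0:ℝ) ≤ (if j = i ∧ otherBids θ' j = T then ε else 0) := by
      split_ifs <;> linarith
    dsimp only
    linarith
  · refine ⟨θ, hθ, i, ?_⟩
    simp [hT, hε]

/-- for a feasible anonymous Groves mechanism `h` in a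
multi-unit auction: if it is undominated then for every player `i` and every
profile `θ_{-i}` of others' bids, the supremum over `θ_i ∈ [L,U]` of the
total payment equals `0`; moreover, if for some `i` and `θ_{-i}` the total
payment stays below `−ε < 0` for all `θ_i`, then the mechanism is dominated
by another feasible Groves mechanism. -/
theorem undominated_iff_max_total_zero
    {n m : ℕ} (hm0 : 0 < m) (hmn : m < n) (L U : ℝ) (hLU : L ≤ U)
    (h : Multiset ℝ → ℝ)
    (hfeas : ∀ θ : Fin n → ℝ, (∀ i, θ i ∈ Set.Icc L U) →
      totalPay m (fun _ => h) θ ≤ 0) :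
    (¬ DominatedMech n m L U h →
      ∀ θ : Fin n → ℝ, (∀ i, θ i ∈ Set.Icc L U) → ∀ i : Fin n,
        IsLUB {x : ℝ | ∃ θi' ∈ Set.Icc L U,
          x = totalPay m (fun _ => h) (Function.update θ i θi')} 0) ∧
    (∀ θ : Fin n → ℝ, (∀ i, θ i ∈ Set.Icc L U) → ∀ i : Fin n, ∀ ε : ℝ, 0 < ε →
      (∀ θi' ∈ Set.Icc L U,
        totalPay m (fun _ => h) (Function.update θ i θi') ≤ -ε) →
      DominatedMech n m L U h) := by
  have box : ∀ (θ : Fin n → ℝ), (∀ i, θ i ∈ Set.Icc L U) → ∀ (i : Fin n),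
      ∀ θi' ∈ Set.Icc L U, ∀ j, Function.update θ i θi' j ∈ Set.Icc L U := by
    intro θ hθ i θi' hθi' j
    rw [Function.update_apply]
    split_ifs
    · exact hθi'
    · exact hθ j
  constructor
  · intro hund θ hθ i
    constructor
    · rintro x ⟨θi', hθi', rfl⟩
      exact hfeas _ (box θ hθ i θi' hθi')
    · intro b hb
      by_contra h0
      push_neg at h0
      exact hund (dominated_of_uniform_gap hfeas θ hθ i (-b) (by linarith)
        (fun θi' hθi' => by simpa using hb ⟨θi', hθi', rfl⟩))
  · intro θ hθ i ε hε hle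
    exact dominated_of_uniform_gap hfeas θ hθ i ε hε hle
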